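/- Let Z be a bounded projection (Z² = Z) on a Hilbert space W with Z ≠ 0 and Z ≠ I. Then ‖I − Z‖_W = ‖Z‖_W. Moreover, if Π denotes the W-orthogonal projection onto Ran(Z), then for every u ∈ W, (1/‖Z‖_W)·‖(I − Z)u‖_W ≤ ‖(I − Π)u‖_W ≤ ‖(I − Z)u‖_W. -/

import Mathlib

open scoped InnerProductSpace

private lemma quadAux (M c β : ℝ) (hM : 1 ≤ M) (hc : 0 ≤ c) (hβ : 0 ≤ β)
    (h : ∀ s : ℝ, (1 + s) ^ 2 * β ≤ M * (β + s ^ 2 * c)) : c + β ≤ M * c := by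
  have hQ : ∀ s : ℝ, 0 ≤ (M * c - β) * (s * s) + (-2 * β) * s + (M - 1) * β := by
    intro s
    nlinarith [h s]
  have hdisc := discrim_le_zero hQ
  rw [discrim] at hdisc
  by_contra hcon
  push_neg at hcon
  have h1 : 0 ≤ β * (c + β - M * c) := by nlinarith
  have h2 : M * (β * (c + β - M * c)) ≤ 0 := by nlinarith
  have h3 : β * (c + β - M * c) ≤ M * (β * (c + β - M * c)) := le_mul_of_one_le_left h1 hM
  have h4 : β * (c + β - M * c) = 0 := le_antisymm (by linarith) h1
  have hβ0 : β = 0 := by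
    rcases mul_eq_zero.mp h4 with h' | h'
    · exact h'
    · linarith
  rw [hβ0] at hcon
  nlinarith [mul_nonneg (sub_nonneg.mpr hM) hc]

/-- Core pointwise bound: for an idempotent `Z` with `1 ≤ ‖Z‖` and an orthogonal
projection `Pi` onto `range Z`, `‖x - Z x‖ ≤ ‖Z‖ * ‖x‖`. -/
private lemma coreBound {W : Type*} [NormedAddCommGroup W] [InnerProductSpace ℂ W]
    (Z : W →L[ℂ] W) (hidem : ∀ x, Z (Z x) = Z x) (hZ1 : 1 ≤ ‖Z‖)
    (Pi : W →L[ℂ] W)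
    (hPi_mem : ∀ u : W, Pi u ∈ LinearMap.range (Z : W →ₗ[ℂ] W))
    (hPi_orth : ∀ u : W, ∀ v ∈ LinearMap.range (Z : W →ₗ[ℂ] W), ⟪u - Pi u, v⟫_ℂ = 0)
    (x : W) : ‖x - Z x‖ ≤ ‖Z‖ * ‖x‖ := by
  set a := Pi x with ha
  set b := x - Pi x with hb
  have hZa : Z a = a := by
    obtain ⟨w, hw⟩ := hPi_mem x
    rw [ha, ← hw]; exact hidem w
  have hba : ⟪b, a⟫_ℂ = 0 := hPi_orth x a (hPi_mem x)
  have hbZb : ⟪b, Z b⟫_ℂ = 0 := hPi_orth x (Z b) ⟨b, rfl⟩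
  have hZbb : RCLike.re (⟪Z b, b⟫_ℂ) = 0 := by
    rw [← inner_conj_symm, hbZb]; simp
  have hxab : x = a + b := by rw [ha, hb]; abel
  have hxZ : x - Z x = b - Z b := by
    rw [hxab]; simp only [map_add, hZa]; abel
  -- ‖b‖ ≤ ‖x‖
  have hx_sq : ‖x‖ ^ 2 = ‖a‖ ^ 2 + ‖b‖ ^ 2 := by
    rw [hxab, norm_add_sq (𝕜 := ℂ)]
    have hab : RCLike.re (⟪a, b⟫_ℂ) = 0 := by
      rw [← inner_conj_symm, hba]; simp
    rw [hab]; ring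
  have hb_le_x : ‖b‖ ≤ ‖x‖ := by
    have h2 : ‖b‖ ^ 2 ≤ ‖x‖ ^ 2 := by nlinarith [sq_nonneg ‖a‖]
    have := Real.sqrt_le_sqrt h2
    rwa [Real.sqrt_sq (norm_nonneg _), Real.sqrt_sq (norm_nonneg _)] at this
  -- key quadratic inequality family
  set M : ℝ := ‖Z‖ ^ 2 with hM
  set c : ℝ := ‖b‖ ^ 2 with hc
  set β : ℝ := ‖Z b‖ ^ 2 with hβ
  have hfam : ∀ s : ℝ, (1 + s) ^ 2 * β ≤ M * (β + s ^ 2 * c) := by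
    intro s
    have hw : Z (Z b + (s : ℂ) • b) = ((1 + s : ℝ) : ℂ) • Z b := by
      rw [map_add, map_smul, hidem]
      push_cast
      rw [add_smul, one_smul]
    have hbound : ‖Z (Z b + (s : ℂ) • b)‖ ≤ ‖Z‖ * ‖Z b + (s : ℂ) • b‖ :=
      Z.le_opNorm _
    have hlhs : ‖Z (Z b + (s : ℂ) • b)‖ = |1 + s| * ‖Z b‖ := by
      rw [hw, norm_smul, Complex.norm_real, Real.norm_eq_abs]
    have hrhs : ‖Z b + (s : ℂ) • b‖ ^ 2 = β + s ^ 2 * c := by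
      rw [norm_add_sq (𝕜 := ℂ)]
      have : RCLike.re (⟪Z b, (s : ℂ) • b⟫_ℂ) = 0 := by
        rw [inner_smul_right, ← inner_conj_symm, hbZb]
        simp
      rw [this, norm_smul]
      simp only [hβ, hc, Complex.norm_real, Real.norm_eq_abs]
      rw [mul_pow, sq_abs]
      ring
    have hsq : ‖Z (Z b + (s : ℂ) • b)‖ ^ 2 ≤ ‖Z‖ ^ 2 * ‖Z b + (s : ℂ) • b‖ ^ 2 := by
      nlinarith [hbound, norm_nonneg (Z (Z b + (s : ℂ) • b)),
        norm_nonneg (Z b + (s : ℂ) • b), norm_nonneg Z]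
    rw [hlhs, hrhs] at hsq
    calc (1 + s) ^ 2 * β = (|1 + s| * ‖Z b‖) ^ 2 := by
          rw [mul_pow, sq_abs, hβ]
      _ ≤ M * (β + s ^ 2 * c) := hsq
  have hquad : c + β ≤ M * c :=
    quadAux M c β (by nlinarith) (by positivity) (by positivity) hfam
  -- conclude
  have hbZb_sq : ‖b - Z b‖ ^ 2 = c + β := by
    rw [norm_sub_sq (𝕜 := ℂ)]
    have : RCLike.re (⟪b, Z b⟫_ℂ) = 0 := by rw [hbZb]; simp
    rw [this, hβ, hc]; ring
  have hfinal : ‖x - Z x‖ ^ 2 ≤ (‖Z‖ * ‖x‖) ^ 2 := by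
    rw [hxZ, hbZb_sq, mul_pow]
    calc c + β ≤ M * c := hquad
      _ ≤ ‖Z‖ ^ 2 * ‖x‖ ^ 2 := by
          rw [hM, hc]
          have : ‖b‖ ^ 2 ≤ ‖x‖ ^ 2 := by nlinarith [sq_nonneg ‖a‖]
          nlinarith [sq_nonneg ‖Z‖]
  have := Real.sqrt_le_sqrt hfinal
  rwa [Real.sqrt_sq (norm_nonneg _), Real.sqrt_sq (by positivity)] at this

private lemma one_le_normAux {W : Type*} [NormedAddCommGroup W] [InnerProductSpace ℂ W]
    (Z : W →L[ℂ] W) (hidem : Z ∘L Z = Z) (hZ0 : Z ≠ 0) : 1 ≤ ‖Z‖ := by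
  have h1 : ‖Z‖ ≤ ‖Z‖ * ‖Z‖ := by
    conv_lhs => rw [← hidem]
    exact ContinuousLinearMap.opNorm_comp_le Z Z
  have h2 : 0 < ‖Z‖ := norm_pos_iff.mpr hZ0
  nlinarith

/-- Lemma `idemp`.  Let `Z` be a bounded projection (`Z ∘ Z = Z`) on a
complex Hilbert space `W`, with `Z ≠ 0` and `Z ≠ I`.  Then `‖I - Z‖ = ‖Z‖`; moreover, if
`Π` is the `W`-orthogonal projection onto `Ran Z` (encoded by: `Π u ∈ Ran Z` and
`u - Π u ⟂ Ran Z` for all `u`), then for every `u ∈ W`,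
`(1/‖Z‖)·‖(I - Z)u‖ ≤ ‖(I - Π)u‖ ≤ ‖(I - Z)u‖`. -/
theorem stmt0 {W : Type*} [NormedAddCommGroup W] [InnerProductSpace ℂ W] [CompleteSpace W]
    (Z : W →L[ℂ] W) (hidem : Z ∘L Z = Z) (hZ0 : Z ≠ 0) (hZ1 : Z ≠ 1)
    (Pi : W →L[ℂ] W)
    (hPi_mem : ∀ u : W, Pi u ∈ LinearMap.range (Z : W →ₗ[ℂ] W))
    (hPi_orth : ∀ u : W, ∀ v ∈ LinearMap.range (Z : W →ₗ[ℂ] W), ⟪u - Pi u, v⟫_ℂ = 0) :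
    ‖(1 : W →L[ℂ] W) - Z‖ = ‖Z‖ ∧
      ∀ u : W,
        (1 / ‖Z‖) * ‖u - Z u‖ ≤ ‖u - Pi u‖ ∧ ‖u - Pi u‖ ≤ ‖u - Z u‖ := by
  have hidem' : ∀ x, Z (Z x) = Z x := fun x => by
    rw [← ContinuousLinearMap.comp_apply, hidem]
  have hZnorm : 1 ≤ ‖Z‖ := one_le_normAux Z hidem hZ0
  have hZpos : 0 < ‖Z‖ := by linarith
  -- forward bound: ‖1 - Z‖ ≤ ‖Z‖
  have hA : ∀ x, ‖x - Z x‖ ≤ ‖Z‖ * ‖x‖ :=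
    coreBound Z hidem' hZnorm Pi hPi_mem hPi_orth
  have hforward : ‖(1 : W →L[ℂ] W) - Z‖ ≤ ‖Z‖ := by
    refine ContinuousLinearMap.opNorm_le_bound _ hZpos.le fun x => ?_
    simpa using hA x
  -- set up Q = 1 - Z
  set Q : W →L[ℂ] W := 1 - Z with hQ
  have hQapp : ∀ x, Q x = x - Z x := fun x => by simp [hQ]
  have hQidem' : ∀ x, Q (Q x) = Q x := fun x => by
    simp only [hQapp, map_sub, hidem' x]
    abel
  have hQcomp : Q ∘L Q = Q := by
    ext x
    exact hQidem' x
  have hQ0 : Q ≠ 0 := by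
    intro h
    apply hZ1
    have : (1 : W →L[ℂ] W) - Z = 0 := h
    rw [sub_eq_zero] at this
    exact this.symm
  have hQnorm : 1 ≤ ‖Q‖ := one_le_normAux Q hQcomp hQ0
  -- orthogonal projection onto ker Z = range Q
  set K : Submodule ℂ W := LinearMap.ker (Z : W →ₗ[ℂ] W) with hK
  haveI : CompleteSpace K := (ContinuousLinearMap.isClosed_ker Z).completeSpace_coe
  set Pi' : W →L[ℂ] W := K.subtypeL ∘L K.orthogonalProjectionOnto with hPi'
  have hPi'app : ∀ u, Pi' u = (K.orthogonalProjectionOnto u : W) := fun u => rfl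
  have hPi'_mem : ∀ u : W, Pi' u ∈ LinearMap.range (Q : W →ₗ[ℂ] W) := by
    intro u
    have hmemK : Pi' u ∈ K := by rw [hPi'app]; exact SetLike.coe_mem _
    refine ⟨Pi' u, ?_⟩
    show Q (Pi' u) = Pi' u; rw [hQapp]
    have : Z (Pi' u) = 0 := hmemK
    rw [this, sub_zero]
  have hrangeQ_sub : ∀ v, v ∈ LinearMap.range (Q : W →ₗ[ℂ] W) → v ∈ K := by
    rintro v ⟨w, rfl⟩
    show Z (Q w) = 0
    rw [hQapp, map_sub, hidem' w, sub_self]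
  have hPi'_orth : ∀ u : W, ∀ v ∈ LinearMap.range (Q : W →ₗ[ℂ] W), ⟪u - Pi' u, v⟫_ℂ = 0 := by
    intro u v hv
    have hvK : v ∈ K := hrangeQ_sub v hv
    have h1 : u - Pi' u ∈ Kᗮ := by
      rw [hPi'app]
      exact K.sub_starProjection_mem_orthogonal u
    rw [inner_eq_zero_symm]
    exact h1 v hvK
  have hB : ∀ x, ‖x - Q x‖ ≤ ‖Q‖ * ‖x‖ :=
    coreBound Q hQidem' hQnorm Pi' hPi'_mem hPi'_orth
  have hbackward : ‖Z‖ ≤ ‖(1 : W →L[ℂ] W) - Z‖ := by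
    refine ContinuousLinearMap.opNorm_le_bound _ (norm_nonneg _) fun x => ?_
    have := hB x
    rw [hQapp] at this
    simpa using this
  have heq : ‖(1 : W →L[ℂ] W) - Z‖ = ‖Z‖ := le_antisymm hforward hbackward
  refine ⟨heq, fun u => ?_⟩
  have hZPiu : Z (Pi u) = Pi u := by
    obtain ⟨w, hw⟩ := hPi_mem u
    rw [← hw]; exact hidem' w
  constructor
  · -- left bound
    have h1 := hA (u - Pi u)
    have h2 : (u - Pi u) - Z (u - Pi u) = u - Z u := by
      rw [map_sub, hZPiu]
      abel
    rw [h2] at h1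
    rw [one_div, inv_mul_le_iff₀ hZpos]
    exact h1
  · -- right bound
    have hmem : Pi u - Z u ∈ LinearMap.range (Z : W →ₗ[ℂ] W) := by
      exact Submodule.sub_mem _ (hPi_mem u) ⟨u, rfl⟩
    have horth : RCLike.re (⟪u - Pi u, Pi u - Z u⟫_ℂ) = 0 := by
      rw [hPi_orth u _ hmem]; simp
    have hdecomp : u - Z u = (u - Pi u) + (Pi u - Z u) := by abel
    have hsq : ‖u - Z u‖ ^ 2 = ‖u - Pi u‖ ^ 2 + ‖Pi u - Z u‖ ^ 2 := by
      rw [hdecomp, norm_add_sq (𝕜 := ℂ), horth]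
      ring
    have h2 : ‖u - Pi u‖ ^ 2 ≤ ‖u - Z u‖ ^ 2 := by nlinarith [sq_nonneg ‖Pi u - Z u‖]
    have := Real.sqrt_le_sqrt h2
    rwa [Real.sqrt_sq (norm_nonneg _), Real.sqrt_sq (norm_nonneg _)] at this
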